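/- Let M > 0 and let ω : [1,∞) → ℝ be twice continuously differentiable with ω'(ζ) ≤ −1/2, |ω'(ζ)| ≤ M, and |ω''(ζ)| ≤ M/ζ for all ζ ≥ 1. Then there exist a real constant c and a constant C > 0 such that for every η ≥ 1, |∫₁^η (cos(ω(ζ))/ζ) dζ − c| ≤ C/η. -/

import Mathlib

open MeasureTheory Set intervalIntegral

/-- Non-stationary phase lemma: if `ω` is C² on `[1,∞)` with
`ω'(ζ) ≤ −1/2`, `|ω'(ζ)| ≤ M` and `|ω''(ζ)| ≤ M/ζ` for all `ζ ≥ 1`, then the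
oscillatory integral `∫₁^η cos(ω(ζ))/ζ dζ` converges to some constant `c` with rate
`O(1/η)`. -/
theorem stmt_18 (M : ℝ) (hM : 0 < M) (ω : ℝ → ℝ) (hω : ContDiff ℝ 2 ω)
    (h1 : ∀ ζ : ℝ, 1 ≤ ζ → deriv ω ζ ≤ -(1 / 2))
    (h2 : ∀ ζ : ℝ, 1 ≤ ζ → |deriv ω ζ| ≤ M)
    (h3 : ∀ ζ : ℝ, 1 ≤ ζ → |deriv (deriv ω) ζ| ≤ M / ζ) :
    ∃ c C : ℝ, 0 < C ∧
      ∀ η : ℝ, 1 ≤ η →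
        |(∫ ζ in (1 : ℝ)..η, Real.cos (ω ζ) / ζ) - c| ≤ C / η := by
  -- regularity facts
  have hω1 : ContDiff ℝ 1 (deriv ω) := by
    have : ContDiff ℝ ((1 : ℕ) + 1) ω := by exact_mod_cast hω
    exact (contDiff_succ_iff_deriv.mp (by exact_mod_cast this)).2.2
  have hdω : Differentiable ℝ ω := hω.differentiable two_ne_zero
  have hdω' : Differentiable ℝ (deriv ω) := hω1.differentiable one_ne_zero
  have hcω' : Continuous (deriv ω) := hdω'.continuous
  have hcω'' : Continuous (deriv (deriv ω)) := hω1.continuous_deriv le_rfl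
  -- auxiliary functions
  set g : ℝ → ℝ := fun ζ => (ζ * deriv ω ζ)⁻¹ with hg_def
  set g' : ℝ → ℝ := fun ζ =>
    -((deriv ω ζ + ζ * deriv (deriv ω) ζ) / (ζ * deriv ω ζ) ^ 2) with hg'_def
  set φ : ℝ → ℝ := fun ζ => Real.sin (ω ζ) * g ζ with hφ_def
  set h : ℝ → ℝ := fun ζ => Real.sin (ω ζ) * g' ζ with hh_def
  -- basic nonvanishing
  have hne : ∀ ζ : ℝ, 1 ≤ ζ → ζ * deriv ω ζ ≠ 0 := by
    intro ζ hζ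
    have h0 : (0:ℝ) < ζ := lt_of_lt_of_le one_pos hζ
    have := h1 ζ hζ
    nlinarith
  -- derivative of φ
  have hφderiv : ∀ ζ : ℝ, 1 ≤ ζ →
      HasDerivAt φ (Real.cos (ω ζ) / ζ + h ζ) ζ := by
    intro ζ hζ
    have h0 : (0:ℝ) < ζ := lt_of_lt_of_le one_pos hζ
    have hsin : HasDerivAt (fun z => Real.sin (ω z)) (Real.cos (ω ζ) * deriv ω ζ) ζ :=
      (Real.hasDerivAt_sin (ω ζ)).comp ζ (hdω ζ).hasDerivAt
    have hu : HasDerivAt (fun z => z * deriv ω z)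
        (1 * deriv ω ζ + ζ * deriv (deriv ω) ζ) ζ :=
      (hasDerivAt_id ζ).mul (hdω' ζ).hasDerivAt
    have hg : HasDerivAt g (g' ζ) ζ := by
      refine (hu.inv (hne ζ hζ)).congr_deriv ?_
      rw [hg'_def]; ring
    have := hsin.mul hg
    have heq : Real.cos (ω ζ) * deriv ω ζ * g ζ + Real.sin (ω ζ) * g' ζ
        = Real.cos (ω ζ) / ζ + h ζ := by
      have hω0 : deriv ω ζ ≠ 0 := by
        have := h1 ζ hζ; intro hc; rw [hc] at this; linarith
      simp only [hg_def, hh_def]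
      field_simp
    rw [heq] at this; exact this
  -- continuity of the boundary term ingredients on [1, ∞)
  have hcont_g' : ContinuousOn g' (Ici 1) := by
    apply ContinuousOn.neg
    apply ContinuousOn.div
    · exact (hcω'.add (continuous_id.mul hcω'')).continuousOn
    · exact ((continuous_id.mul hcω').pow 2).continuousOn
    · intro ζ hζ
      exact pow_ne_zero 2 (hne ζ hζ)
  have hcont_h : ContinuousOn h (Ici 1) :=
    ((Real.continuous_sin.comp hω.continuous).continuousOn).mul hcont_g'
  have hcont_ψ : ContinuousOn (fun ζ => Real.cos (ω ζ) / ζ) (Ici 1) := by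
    apply ContinuousOn.div
    · exact (Real.continuous_cos.comp hω.continuous).continuousOn
    · exact continuous_id.continuousOn
    · intro ζ hζ
      exact ne_of_gt (lt_of_lt_of_le one_pos hζ)
  -- pointwise bounds
  have hgbound : ∀ ζ : ℝ, 1 ≤ ζ → |g ζ| ≤ 2 / ζ := by
    intro ζ hζ
    have h0 : (0:ℝ) < ζ := lt_of_lt_of_le one_pos hζ
    have hω' := h1 ζ hζ
    have habs : (1:ℝ)/2 ≤ |deriv ω ζ| := by
      linarith [neg_le_abs (deriv ω ζ)]
    have hprod : ζ / 2 ≤ |ζ * deriv ω ζ| := by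
      rw [abs_mul, abs_of_pos h0]
      calc ζ / 2 = ζ * (1/2) := by ring
        _ ≤ ζ * |deriv ω ζ| := by nlinarith
    have h2' : (0:ℝ) < ζ / 2 := by linarith
    simp only [hg_def, abs_inv]
    calc |ζ * deriv ω ζ|⁻¹ ≤ (ζ / 2)⁻¹ := inv_anti₀ h2' hprod
      _ = 2 / ζ := by field_simp
  have hg'bound : ∀ ζ : ℝ, 1 ≤ ζ → |g' ζ| ≤ 8 * M / ζ ^ 2 := by
    intro ζ hζ
    have h0 : (0:ℝ) < ζ := lt_of_lt_of_le one_pos hζ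
    have hnum : |deriv ω ζ + ζ * deriv (deriv ω) ζ| ≤ 2 * M := by
      have hb1 := h2 ζ hζ
      have hb2 := h3 ζ hζ
      have : |ζ * deriv (deriv ω) ζ| ≤ M := by
        rw [abs_mul, abs_of_pos h0]
        calc ζ * |deriv (deriv ω) ζ| ≤ ζ * (M / ζ) := by nlinarith [abs_nonneg (deriv (deriv ω) ζ)]
          _ = M := by field_simp
      calc |deriv ω ζ + ζ * deriv (deriv ω) ζ|
          ≤ |deriv ω ζ| + |ζ * deriv (deriv ω) ζ| := abs_add_le _ _
        _ ≤ 2 * M := by linarith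
    have hden : ζ ^ 2 / 4 ≤ (ζ * deriv ω ζ) ^ 2 := by
      have hω' := h1 ζ hζ
      have h14 : (1:ℝ)/4 ≤ (deriv ω ζ) ^ 2 := by nlinarith
      calc ζ ^ 2 / 4 = ζ ^ 2 * (1/4) := by ring
        _ ≤ ζ ^ 2 * (deriv ω ζ) ^ 2 := by nlinarith [sq_nonneg ζ]
        _ = (ζ * deriv ω ζ) ^ 2 := by ring
    have hden0 : (0:ℝ) < ζ ^ 2 / 4 := by positivity
    rw [hg'_def]
    simp only [abs_neg, abs_div, abs_pow, sq_abs]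
    calc |deriv ω ζ + ζ * deriv (deriv ω) ζ| / (ζ * deriv ω ζ) ^ 2
        ≤ (2 * M) / (ζ ^ 2 / 4) := by
          apply div_le_div₀ (by positivity) hnum hden0 hden
      _ = 8 * M / ζ ^ 2 := by field_simp; ring
  have hhbound : ∀ ζ : ℝ, 1 ≤ ζ → |h ζ| ≤ 8 * M / ζ ^ 2 := by
    intro ζ hζ
    rw [hh_def]
    calc |Real.sin (ω ζ) * g' ζ| = |Real.sin (ω ζ)| * |g' ζ| := abs_mul _ _
      _ ≤ 1 * (8 * M / ζ ^ 2) := by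
          apply mul_le_mul (Real.abs_sin_le_one _) (hg'bound ζ hζ)
            (abs_nonneg _) one_pos.le
      _ = 8 * M / ζ ^ 2 := one_mul _
  -- integrability of h on Ioi 1 (and tails)
  have hbound_int : ∀ η : ℝ, 1 ≤ η →
      IntegrableOn (fun ζ : ℝ => 8 * M * ζ ^ (-2 : ℝ)) (Ioi η) := by
    intro η hη
    exact (integrableOn_Ioi_rpow_of_lt (by norm_num) (lt_of_lt_of_le one_pos hη)).const_mul _
  have hInt : ∀ η : ℝ, 1 ≤ η → IntegrableOn h (Ioi η) := by
    intro η hη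
    apply Integrable.mono' (hbound_int η hη)
    · exact ((hcont_h.mono (fun x hx => le_trans hη (le_of_lt hx))).aestronglyMeasurable
        measurableSet_Ioi)
    · filter_upwards [ae_restrict_mem measurableSet_Ioi] with ζ hζ
      have hζ1 : (1:ℝ) ≤ ζ := le_trans hη (le_of_lt hζ)
      have h0 : (0:ℝ) < ζ := lt_of_lt_of_le one_pos hζ1
      have : (ζ : ℝ) ^ (-2 : ℝ) = (ζ ^ 2)⁻¹ := by
        rw [Real.rpow_neg h0.le, ← Real.rpow_natCast ζ 2]
        norm_num
      rw [Real.norm_eq_abs, this]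
      calc |h ζ| ≤ 8 * M / ζ ^ 2 := hhbound ζ hζ1
        _ = 8 * M * (ζ ^ 2)⁻¹ := by ring
  -- tail estimate
  have htail : ∀ η : ℝ, 1 ≤ η → |∫ ζ in Ioi η, h ζ| ≤ 8 * M / η := by
    intro η hη
    have h0 : (0:ℝ) < η := lt_of_lt_of_le one_pos hη
    have hb : ∀ᵐ ζ ∂(volume.restrict (Ioi η)), ‖h ζ‖ ≤ 8 * M * ζ ^ (-2 : ℝ) := by
      filter_upwards [ae_restrict_mem measurableSet_Ioi] with ζ hζ
      have hζ1 : (1:ℝ) ≤ ζ := le_trans hη (le_of_lt hζ)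
      have h0' : (0:ℝ) < ζ := lt_of_lt_of_le one_pos hζ1
      have : (ζ : ℝ) ^ (-2 : ℝ) = (ζ ^ 2)⁻¹ := by
        rw [Real.rpow_neg h0'.le, ← Real.rpow_natCast ζ 2]
        norm_num
      rw [Real.norm_eq_abs, this]
      calc |h ζ| ≤ 8 * M / ζ ^ 2 := hhbound ζ hζ1
        _ = 8 * M * (ζ ^ 2)⁻¹ := by ring
    calc |∫ ζ in Ioi η, h ζ| ≤ ∫ ζ in Ioi η, 8 * M * ζ ^ (-2 : ℝ) :=
          norm_integral_le_of_norm_le (hbound_int η hη) hb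
      _ = 8 * M * ∫ ζ in Ioi η, ζ ^ (-2 : ℝ) := by
          rw [MeasureTheory.integral_const_mul]
      _ = 8 * M * (-η ^ ((-2 : ℝ) + 1) / ((-2 : ℝ) + 1)) := by
          rw [integral_Ioi_rpow_of_lt (by norm_num) h0]
      _ = 8 * M / η := by
          rw [show ((-2 : ℝ) + 1) = -1 by norm_num, Real.rpow_neg_one]
          field_simp
  -- the constant
  refine ⟨-φ 1 - ∫ ζ in Ioi 1, h ζ, 2 + 8 * M, by linarith, ?_⟩
  intro η hη
  have h0 : (0:ℝ) < η := lt_of_lt_of_le one_pos hη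
  have hIcc : uIcc (1:ℝ) η = Icc 1 η := uIcc_of_le hη
  have hIccsub : Icc (1:ℝ) η ⊆ Ici 1 := fun x hx => hx.1
  -- interval integrability
  have hψint : IntervalIntegrable (fun ζ => Real.cos (ω ζ) / ζ) volume 1 η := by
    apply ContinuousOn.intervalIntegrable
    rw [hIcc]; exact hcont_ψ.mono hIccsub
  have hhint : IntervalIntegrable h volume 1 η := by
    apply ContinuousOn.intervalIntegrable
    rw [hIcc]; exact hcont_h.mono hIccsub
  -- fundamental theorem of calculus
  have key : (∫ ζ in (1:ℝ)..η, (Real.cos (ω ζ) / ζ + h ζ)) = φ η - φ 1 := by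
    apply intervalIntegral.integral_eq_sub_of_hasDerivAt
    · intro ζ hζ
      rw [hIcc] at hζ
      exact hφderiv ζ hζ.1
    · exact hψint.add hhint
  have hsplit : (∫ ζ in (1:ℝ)..η, Real.cos (ω ζ) / ζ)
      = φ η - φ 1 - ∫ ζ in (1:ℝ)..η, h ζ := by
    have := intervalIntegral.integral_add hψint hhint
    rw [this] at key
    linarith
  -- relate interval integral of h to tails
  have hioc : (∫ ζ in (1:ℝ)..η, h ζ) = (∫ ζ in Ioc 1 η, h ζ) :=
    intervalIntegral.integral_of_le hη
  have hIocInt : IntegrableOn h (Ioc 1 η) :=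
    (hInt 1 le_rfl).mono_set Ioc_subset_Ioi_self
  have hunion : (∫ ζ in Ioi (1:ℝ), h ζ)
      = (∫ ζ in Ioc 1 η, h ζ) + ∫ ζ in Ioi η, h ζ := by
    rw [← setIntegral_union (Ioc_disjoint_Ioi le_rfl) measurableSet_Ioi hIocInt (hInt η hη),
      Ioc_union_Ioi_eq_Ioi hη]
  -- put everything together
  have heq : (∫ ζ in (1:ℝ)..η, Real.cos (ω ζ) / ζ) - (-φ 1 - ∫ ζ in Ioi 1, h ζ)
      = φ η + ∫ ζ in Ioi η, h ζ := by
    rw [hsplit, hioc, hunion]; ring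
  rw [heq]
  have hφb : |φ η| ≤ 2 / η := by
    rw [hφ_def]
    calc |Real.sin (ω η) * g η| = |Real.sin (ω η)| * |g η| := abs_mul _ _
      _ ≤ 1 * (2 / η) := mul_le_mul (Real.abs_sin_le_one _) (hgbound η hη)
          (abs_nonneg _) one_pos.le
      _ = 2 / η := one_mul _
  calc |φ η + ∫ ζ in Ioi η, h ζ| ≤ |φ η| + |∫ ζ in Ioi η, h ζ| := abs_add_le _ _
    _ ≤ 2 / η + 8 * M / η := add_le_add hφb (htail η hη)
    _ = (2 + 8 * M) / η := by ring
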